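/- For μ > 0, the operator A_μ on L²([x_L,x_R]; σ_T dx) is compact, A_μ*A_μ and A_μA_μ* are trace class with equal traces, and tr(A_μ*A_μ) ≤ (1/μ)|x_R − x_L| · ‖σ_T‖_∞² · ‖σ_T⁻¹‖_∞. -/

import Mathlib

open MeasureTheory intervalIntegral Real ContinuousLinearMap
open scoped RealInnerProductSpace ENNReal

section Abstract
variable {H : Type*} [NormedAddCommGroup H] [InnerProductSpace ℝ H] [CompleteSpace H]
variable {ι : Type*}

lemma parseval_ofReal (b : HilbertBasis ι ℝ H) (x : H) :
    ∑' i, ENNReal.ofReal (⟪b i, x⟫ ^ 2) = ENNReal.ofReal (‖x‖ ^ 2) := by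
  have h : HasSum (fun i => ⟪b i, x⟫ ^ 2) (‖x‖ ^ 2) := by
    have := b.hasSum_inner_mul_inner x x
    rw [real_inner_self_eq_norm_sq] at this
    rw [show (fun i => ⟪b i, x⟫ ^ 2) = fun i => ⟪x, b i⟫ * ⟪b i, x⟫ from
      funext fun i => by rw [sq, real_inner_comm]]
    exact this
  rw [← h.tsum_eq, ← ENNReal.ofReal_tsum_of_nonneg (fun i => sq_nonneg _) h.summable]

lemma summable_inner_sq (b : HilbertBasis ι ℝ H) (x : H) :
    Summable (fun i => ⟪b i, x⟫ ^ 2) := by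
  have := b.hasSum_inner_mul_inner x x
  have h2 : (fun i => ⟪b i, x⟫ ^ 2) = fun i => ⟪x, b i⟫ * ⟪b i, x⟫ := by
    funext i; rw [sq, real_inner_comm]
  rw [h2]; exact this.summable

lemma tsum_inner_sq_eq (b : HilbertBasis ι ℝ H) (x : H) :
    ∑' i, ⟪b i, x⟫ ^ 2 = ‖x‖ ^ 2 := by
  have := b.tsum_inner_mul_inner x x
  rw [real_inner_self_eq_norm_sq] at this
  rw [← this]
  congr 1; funext i; rw [sq, real_inner_comm]

/-- HS duality: `∑ ‖A bᵢ‖² = ∑ ‖A* bᵢ‖²` in `ℝ≥0∞`. -/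
lemma hs_sum_adjoint (b : HilbertBasis ι ℝ H) (A : H →L[ℝ] H) :
    ∑' i, ENNReal.ofReal (‖A (b i)‖ ^ 2)
      = ∑' i, ENNReal.ofReal (‖(ContinuousLinearMap.adjoint A) (b i)‖ ^ 2) := by
  have key : ∀ i j, ⟪b j, A (b i)⟫ = ⟪b i, (ContinuousLinearMap.adjoint A) (b j)⟫ := by
    intro i j
    rw [← ContinuousLinearMap.adjoint_inner_left, real_inner_comm]
  calc ∑' i, ENNReal.ofReal (‖A (b i)‖ ^ 2)
      = ∑' i, ∑' j, ENNReal.ofReal (⟪b j, A (b i)⟫ ^ 2) := by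
        refine tsum_congr fun i => (parseval_ofReal b _).symm
    _ = ∑' j, ∑' i, ENNReal.ofReal (⟪b i, (ContinuousLinearMap.adjoint A) (b j)⟫ ^ 2) := by
        rw [ENNReal.tsum_comm]
        exact tsum_congr fun j => tsum_congr fun i => by rw [key]
    _ = ∑' j, ENNReal.ofReal (‖(ContinuousLinearMap.adjoint A) (b j)‖ ^ 2) :=
        tsum_congr fun j => parseval_ofReal b _

/-- Cauchy–Schwarz for tsums of nonnegative reals. -/
lemma tsum_mul_le_sqrt_mul_sqrt {f g : ι → ℝ} (hf0 : ∀ i, 0 ≤ f i) (hg0 : ∀ i, 0 ≤ g i)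
    (hf : Summable (fun i => f i ^ 2)) (hg : Summable (fun i => g i ^ 2)) :
    ∑' i, f i * g i ≤ Real.sqrt (∑' i, f i ^ 2) * Real.sqrt (∑' i, g i ^ 2) := by
  have hfg : Summable (fun i => f i * g i) := by
    refine Summable.of_nonneg_of_le (fun i => mul_nonneg (hf0 i) (hg0 i)) (fun i => ?_)
      ((hf.add hg).div_const 2)
    have := sq_nonneg (f i - g i)
    nlinarith
  refine Summable.tsum_le_of_sum_le hfg fun s => ?_
  have hcs := Finset.sum_mul_sq_le_sq_mul_sq s f g
  have h1 : ∑ i ∈ s, f i * g i ≤ Real.sqrt ((∑ i ∈ s, f i ^ 2) * ∑ i ∈ s, g i ^ 2) := by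
    rw [show (∑ i ∈ s, f i * g i) = Real.sqrt ((∑ i ∈ s, f i * g i) ^ 2) from
      (Real.sqrt_sq (Finset.sum_nonneg fun i _ => mul_nonneg (hf0 i) (hg0 i))).symm]
    exact Real.sqrt_le_sqrt hcs
  refine h1.trans ?_
  rw [← Real.sqrt_mul (tsum_nonneg fun i => sq_nonneg _)]
  refine Real.sqrt_le_sqrt (mul_le_mul ?_ ?_ (Finset.sum_nonneg fun i _ => sq_nonneg _)
    (tsum_nonneg fun i => sq_nonneg _))
  · exact Summable.sum_le_tsum s (fun i _ => sq_nonneg _) hf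
  · exact Summable.sum_le_tsum s (fun i _ => sq_nonneg _) hg

/-- rank-one operators are compact. -/
lemma isCompactOperator_rankOne (u : H) (v : H) :
    IsCompactOperator (fun x : H => ⟪u, x⟫ • v) := by
  refine ⟨(fun t : ℝ => t • v) '' Set.Icc (-‖u‖) ‖u‖, ?_, ?_⟩
  · exact (isCompact_Icc).image (continuous_id.smul continuous_const)
  · refine Filter.mem_of_superset (Metric.ball_mem_nhds 0 one_pos) ?_
    intro x hx
    refine ⟨⟪u, x⟫, ?_, rfl⟩
    have := abs_real_inner_le_norm u x
    simp only [Metric.mem_ball, dist_zero_right] at hx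
    constructor
    · nlinarith [abs_nonneg (⟪u, x⟫), neg_abs_le (⟪u, x⟫), norm_nonneg u]
    · nlinarith [le_abs_self (⟪u, x⟫), norm_nonneg u]

/-- An operator with square-summable images of a Hilbert basis is compact. -/
lemma isCompactOperator_of_summable (b : HilbertBasis ι ℝ H) (A : H →L[ℝ] H)
    (hsum : Summable (fun i => ‖A (b i)‖ ^ 2)) : IsCompactOperator A := by
  classical
  -- finite-rank approximants
  set T : Finset ι → (H →L[ℝ] H) :=
    fun F => ∑ i ∈ F, (innerSL ℝ (b i)).smulRight (A (b i)) with hT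
  have hTc : ∀ F, IsCompactOperator (T F) := by
    intro F
    induction F using Finset.induction with
    | empty => simpa [hT] using isCompactOperator_zero
    | @insert a s hnotmem ih =>
        have h2 : T (insert a s) = (innerSL ℝ (b a)).smulRight (A (b a)) + T s := by
          rw [hT]; exact Finset.sum_insert hnotmem
        rw [h2]
        have h3 : IsCompactOperator (fun x : H => ⟪b a, x⟫ • A (b a)) :=
          isCompactOperator_rankOne _ _
        have h4 : IsCompactOperator
            (((innerSL ℝ (b a)).smulRight (A (b a)) : H →L[ℝ] H) : H → H) := h3
        simpa [ContinuousLinearMap.coe_add] using h4.add ih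
  -- tail bound
  have key : ∀ F : Finset ι, ∀ x : H,
      ‖(A - T F) x‖ ≤ Real.sqrt (∑' i : {i // i ∉ F}, ‖A (b (i : ι))‖ ^ 2) * ‖x‖ := by
    intro F x
    set c : ι → ℝ := fun i => ⟪b i, x⟫ with hc
    have hAx : HasSum (fun i => c i • A (b i)) (A x) := by
      have h0 := (b.hasSum_repr x).mapL A
      have heq : (fun i => A (b.repr x i • b i)) = fun i => c i • A (b i) := by
        funext i
        rw [A.map_smul, hc, b.repr_apply_apply]
      rwa [heq] at h0
    have hTFx : T F x = ∑ i ∈ F, c i • A (b i) := by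
      rw [hT]
      simp only [ContinuousLinearMap.sum_apply, ContinuousLinearMap.smulRight_apply,
        innerSL_apply_apply, hc]
    have hcompl : HasSum (fun i : {i // i ∉ F} => c (i : ι) • A (b (i : ι))) ((A - T F) x) := by
      refine (F.hasSum_compl_iff (f := fun i => c i • A (b i))).mpr ?_
      have heq2 : (A - T F) x + ∑ i ∈ F, c i • A (b i) = A x := by
        rw [ContinuousLinearMap.sub_apply, ← hTFx]; abel
      rw [heq2]; exact hAx
    have hsub0 : Summable (fun i : ι => |c i| ^ 2) := by
      simpa [sq_abs, hc] using summable_inner_sq b x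
    have hsub1 : Summable (fun i : {i // i ∉ F} => (|c (i : ι)|) ^ 2) :=
      hsub0.subtype _
    have hsub2 : Summable (fun i : {i // i ∉ F} => ‖A (b (i : ι))‖ ^ 2) :=
      hsum.subtype _
    have hnorm : ‖(A - T F) x‖ ≤ ∑' i : {i // i ∉ F}, |c (i : ι)| * ‖A (b (i : ι))‖ := by
      rw [← hcompl.tsum_eq]
      refine norm_tsum_le_tsum_norm ?_ |>.trans_eq ?_
      · refine Summable.of_nonneg_of_le (fun i => norm_nonneg _) (fun i => ?_)
          ((hsub1.add hsub2).div_const 2)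
        rw [norm_smul]
        have := sq_nonneg (|c (i : ι)| - ‖A (b (i : ι))‖)
        simp only [Real.norm_eq_abs]
        nlinarith [abs_nonneg (c (i : ι)), norm_nonneg (A (b (i : ι)))]
      · exact tsum_congr fun i => by rw [norm_smul, Real.norm_eq_abs]
    refine hnorm.trans ?_
    have := tsum_mul_le_sqrt_mul_sqrt (f := fun i : {i // i ∉ F} => |c (i : ι)|)
      (g := fun i : {i // i ∉ F} => ‖A (b (i : ι))‖)
      (fun i => abs_nonneg _) (fun i => norm_nonneg _) hsub1 hsub2
    refine this.trans ?_
    rw [mul_comm]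
    refine mul_le_mul_of_nonneg_left ?_ (Real.sqrt_nonneg _)
    have h1 : ∑' i : {i // i ∉ F}, |c (i : ι)| ^ 2 ≤ ‖x‖ ^ 2 := by
      rw [← tsum_inner_sq_eq b x]
      refine Summable.tsum_le_tsum_of_inj (Subtype.val) Subtype.val_injective
        (fun i _ => sq_nonneg _) (fun i => by simp [hc, sq_abs]) ?_
        (summable_inner_sq b x)
      simpa [sq_abs, hc] using hsub1
    calc Real.sqrt (∑' i : {i // i ∉ F}, |c (i : ι)| ^ 2) ≤ Real.sqrt (‖x‖ ^ 2) :=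
          Real.sqrt_le_sqrt h1
      _ = ‖x‖ := Real.sqrt_sq (norm_nonneg x)
  have hop : ∀ F : Finset ι, ‖A - T F‖ ≤ Real.sqrt (∑' i : {i // i ∉ F}, ‖A (b (i : ι))‖ ^ 2) :=
    fun F => ContinuousLinearMap.opNorm_le_bound _ (Real.sqrt_nonneg _) (key F)
  have htail : Filter.Tendsto (fun F : Finset ι => ∑' i : {i // i ∉ F}, ‖A (b (i : ι))‖ ^ 2)
      Filter.atTop (nhds 0) :=
    tendsto_tsum_compl_atTop_zero (fun i : ι => ‖A (b i)‖ ^ 2)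
  have hsqrt : Filter.Tendsto
      (fun F : Finset ι => Real.sqrt (∑' i : {i // i ∉ F}, ‖A (b (i : ι))‖ ^ 2))
      Filter.atTop (nhds 0) := by
    have := (Real.continuous_sqrt.tendsto 0).comp htail
    simpa [Function.comp_def] using this
  have hTA : Filter.Tendsto T Filter.atTop (nhds A) := by
    rw [tendsto_iff_norm_sub_tendsto_zero]
    refine squeeze_zero (fun F => norm_nonneg _) (fun F => ?_) hsqrt
    rw [norm_sub_rev]
    exact hop F
  exact isCompactOperator_of_tendsto hTA (Filter.Eventually.of_forall hTc)

end Abstract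

set_option maxHeartbeats 1000000 in
/-- the integral operator `A_μ` on `L²([x_L,x_R]; σ_T dx)` with kernel
`k_μ(x,y) = (1/μ) 1_{y≤x} exp(-(1/μ)∫_y^x σ_T) σ_r(y)/σ_T(y)` is compact, `A_μ*A_μ`
and `A_μA_μ*` are trace class with equal traces, and
`tr(A_μ*A_μ) ≤ (1/μ)|x_R-x_L| ‖σ_T‖_∞² ‖σ_T⁻¹‖_∞`. -/
theorem stmt2 (xL xR : ℝ) (hx : xL < xR) (μ : ℝ) (hμ : 0 < μ)
    (σT σr : ℝ → ℝ)
    (hσT : ContinuousOn σT (Set.Icc xL xR))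
    (hσr : ContinuousOn σr (Set.Icc xL xR))
    (hposr : ∀ x ∈ Set.Icc xL xR, 0 < σr x)
    (hle : ∀ x ∈ Set.Icc xL xR, σr x ≤ σT x)
    (k : ℝ → ℝ → ℝ)
    (hk : ∀ x y, k x y =
      (if y ≤ x then (1 / μ) * Real.exp (-(1 / μ) * ∫ z in y..x, σT z) * (σr y / σT y)
       else 0))
    -- the weighted measure `σ_T dx` on `[x_L, x_R]`
    (ν : Measure ℝ)
    (hν : ν = (volume.restrict (Set.Icc xL xR)).withDensity
      (fun x => ENNReal.ofReal (σT x)))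
    -- `A` is the integral operator with kernel `k` on `L²(ν)`
    (A : Lp ℝ 2 ν →L[ℝ] Lp ℝ 2 ν)
    (hA : ∀ f : Lp ℝ 2 ν, (A f : ℝ → ℝ) =ᵐ[ν] fun x => ∫ y, k x y * f y ∂ν) :
    IsCompactOperator A ∧
    ∀ (ι : Type) (b : HilbertBasis ι ℝ (Lp ℝ 2 ν)),
      Summable (fun i => ⟪b i, ((ContinuousLinearMap.adjoint A) ∘L A) (b i)⟫) ∧
      Summable (fun i => ⟪b i, (A ∘L (ContinuousLinearMap.adjoint A)) (b i)⟫) ∧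
      (∑' i, ⟪b i, ((ContinuousLinearMap.adjoint A) ∘L A) (b i)⟫) =
        (∑' i, ⟪b i, (A ∘L (ContinuousLinearMap.adjoint A)) (b i)⟫) ∧
      (∑' i, ⟪b i, ((ContinuousLinearMap.adjoint A) ∘L A) (b i)⟫) ≤
        (1 / μ) * |xR - xL| * (sSup (σT '' Set.Icc xL xR)) ^ 2 *
          sSup ((fun x => (σT x)⁻¹) '' Set.Icc xL xR) := by
  classical
  have hμ' : μ ≠ 0 := ne_of_gt hμ
  have hxle : xL ≤ xR := hx.le
  have hxLmem : xL ∈ Set.Icc xL xR := ⟨le_refl _, hxle⟩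
  have hposT : ∀ x ∈ Set.Icc xL xR, 0 < σT x := fun x hx' =>
    lt_of_lt_of_le (hposr x hx') (hle x hx')
  -- clamped versions of the data
  set σTc : ℝ → ℝ := fun t => σT (Set.projIcc xL xR hxle t) with hσTcdef
  set σrc : ℝ → ℝ := fun t => σr (Set.projIcc xL xR hxle t) with hσrcdef
  set rq : ℝ → ℝ := fun y => σrc y / σTc y with hrqdef
  set G : ℝ → ℝ := fun t => ∫ z in xL..t, σTc z with hGdef
  set k' : ℝ → ℝ → ℝ := fun x y =>
    if y ≤ x then (1 / μ) * Real.exp (-(1 / μ) * (G x - G y)) * rq y else 0 with hk'def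
  have hσTc_cont : Continuous σTc := hσT.restrict.comp (continuous_projIcc)
  have hσrc_cont : Continuous σrc := hσr.restrict.comp (continuous_projIcc)
  have hσTc_eq : ∀ t ∈ Set.Icc xL xR, σTc t = σT t := by
    intro t ht; rw [hσTcdef]; simp [Set.projIcc_of_mem hxle ht]
  have hσrc_eq : ∀ t ∈ Set.Icc xL xR, σrc t = σr t := by
    intro t ht; rw [hσrcdef]; simp [Set.projIcc_of_mem hxle ht]
  have hσrc_pos : ∀ t, 0 < σrc t := fun t => hposr _ (Set.projIcc xL xR hxle t).2
  have hσrc_le : ∀ t, σrc t ≤ σTc t := fun t => hle _ (Set.projIcc xL xR hxle t).2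
  have hσTc_pos : ∀ t, 0 < σTc t := fun t => lt_of_lt_of_le (hσrc_pos t) (hσrc_le t)
  have hrq_pos : ∀ y, 0 < rq y := fun y => div_pos (hσrc_pos y) (hσTc_pos y)
  have hrq_le : ∀ y, rq y ≤ 1 := fun y =>
    (div_le_one (hσTc_pos y)).2 (hσrc_le y)
  -- sup bounds
  set M := sSup (σT '' Set.Icc xL xR) with hMdef
  set S := sSup ((fun x => (σT x)⁻¹) '' Set.Icc xL xR) with hSdef
  have hMbdd : ∀ x ∈ Set.Icc xL xR, σT x ≤ M := by
    intro x hx'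
    exact le_csSup ((isCompact_Icc.image_of_continuousOn hσT).bddAbove) ⟨x, hx', rfl⟩
  have hM0 : 0 < M := lt_of_lt_of_le (hposT xL hxLmem) (hMbdd xL hxLmem)
  have hSbdd : (σT xL)⁻¹ ≤ S := by
    refine le_csSup ?_ ⟨xL, hxLmem, rfl⟩
    exact (isCompact_Icc.image_of_continuousOn
      (hσT.inv₀ (fun x hx' => ne_of_gt (hposT x hx')))).bddAbove
  have hS0 : 0 < S := lt_of_lt_of_le (inv_pos.2 (hposT xL hxLmem)) hSbdd
  have hMS : 1 ≤ M * S := by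
    have h1 : σT xL * (σT xL)⁻¹ = 1 := mul_inv_cancel₀ (ne_of_gt (hposT xL hxLmem))
    calc (1:ℝ) = σT xL * (σT xL)⁻¹ := h1.symm
      _ ≤ M * S := by
          refine mul_le_mul (hMbdd xL hxLmem) hSbdd ?_ (le_of_lt hM0)
          exact le_of_lt (inv_pos.2 (hposT xL hxLmem))
  set B := 1 / μ * |xR - xL| * M ^ 2 * S with hBdef
  have hB0 : 0 ≤ B := by
    have := abs_nonneg (xR - xL)
    positivity
  have hσTc_le_M : ∀ t, σTc t ≤ M := fun t => by
    rw [hσTcdef]; exact hMbdd _ (Set.projIcc xL xR hxle t).2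
  -- measure facts
  have hνuniv : ν Set.univ ≤ ENNReal.ofReal M * ENNReal.ofReal (xR - xL) := by
    rw [hν, withDensity_apply _ MeasurableSet.univ, setLIntegral_univ]
    calc ∫⁻ x, ENNReal.ofReal (σT x) ∂(volume.restrict (Set.Icc xL xR))
        ≤ ∫⁻ _, ENNReal.ofReal M ∂(volume.restrict (Set.Icc xL xR)) := by
          refine lintegral_mono_ae ?_
          filter_upwards [ae_restrict_mem measurableSet_Icc] with x hx'
          exact ENNReal.ofReal_le_ofReal (hMbdd x hx')
      _ = ENNReal.ofReal M * ENNReal.ofReal (xR - xL) := by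
          rw [lintegral_const, Measure.restrict_apply_univ, Real.volume_Icc]
  haveI hνfin : IsFiniteMeasure ν := by
    refine ⟨lt_of_le_of_lt hνuniv ?_⟩
    exact ENNReal.mul_lt_top ENNReal.ofReal_lt_top ENNReal.ofReal_lt_top
  have hν_ae_Icc : ∀ᵐ y ∂ν, y ∈ Set.Icc xL xR := by
    rw [hν]
    exact (withDensity_absolutelyContinuous _ _).ae_le
      (ae_restrict_mem measurableSet_Icc)
  -- derivative and monotonicity of G
  have hG_deriv : ∀ t, HasDerivAt G (σTc t) t := fun t =>
    (hσTc_cont.integral_hasStrictDerivAt xL t).hasDerivAt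
  have hG_cont : Continuous G := by
    rw [continuous_iff_continuousAt]
    exact fun t => (hG_deriv t).continuousAt
  have hG_mono : ∀ {a c : ℝ}, a ≤ c → G a ≤ G c := by
    intro a c hac
    have h1 : G c - G a = ∫ z in a..c, σTc z := by
      rw [hGdef]
      rw [intervalIntegral.integral_interval_sub_left (hσTc_cont.intervalIntegrable _ _)
        (hσTc_cont.intervalIntegrable _ _)]
    have h2 : 0 ≤ ∫ z in a..c, σTc z :=
      intervalIntegral.integral_nonneg hac (fun u _ => le_of_lt (hσTc_pos u))
    linarith
  -- bounds on k'
  have hk'_nonneg : ∀ x y, 0 ≤ k' x y := by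
    intro x y
    rw [hk'def]
    dsimp only
    split
    · have h1 := (hrq_pos y); have h2 := Real.exp_pos (-(1 / μ) * (G x - G y))
      positivity
    · exact le_refl 0
  have hk'_le : ∀ x y, k' x y ≤ 1 / μ := by
    intro x y
    rw [hk'def]
    dsimp only
    split
    · rename_i hyx
      have h2 : Real.exp (-(1 / μ) * (G x - G y)) ≤ 1 := by
        rw [Real.exp_le_one_iff]
        have := hG_mono hyx
        have h3 : 0 ≤ (1:ℝ) / μ := by positivity
        nlinarith
      have h4 := hrq_pos y
      have h5 := hrq_le y
      have h6 : 0 < (1:ℝ)/μ := by positivity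
      have h8 : Real.exp (-(1 / μ) * (G x - G y)) * rq y ≤ 1 := by
        nlinarith [Real.exp_pos (-(1 / μ) * (G x - G y))]
      calc 1 / μ * Real.exp (-(1 / μ) * (G x - G y)) * rq y
          = 1 / μ * (Real.exp (-(1 / μ) * (G x - G y)) * rq y) := mul_assoc _ _ _
        _ ≤ 1 / μ * 1 := mul_le_mul_of_nonneg_left h8 h6.le
        _ = 1 / μ := mul_one _
    · positivity
  -- measurability of the kernel
  have hk'_meas : Measurable (fun p : ℝ × ℝ => k' p.1 p.2) := by
    have heq : (fun p : ℝ × ℝ => k' p.1 p.2) = Set.indicator {p : ℝ × ℝ | p.2 ≤ p.1}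
        (fun p => (1 / μ) * Real.exp (-(1 / μ) * (G p.1 - G p.2)) * rq p.2) := by
      funext p
      rw [hk'def]
      by_cases h : p.2 ≤ p.1
      · rw [Set.indicator_of_mem (show p ∈ {p : ℝ × ℝ | p.2 ≤ p.1} from h)]
        simp only [if_pos h]
      · rw [Set.indicator_of_notMem (show p ∉ {p : ℝ × ℝ | p.2 ≤ p.1} from h)]
        simp only [if_neg h]
    rw [heq]
    refine Measurable.indicator ?_ ?_
    · have hc : Continuous (fun p : ℝ × ℝ =>
          (1 / μ) * Real.exp (-(1 / μ) * (G p.1 - G p.2)) * rq p.2) := by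
        have hrqc : Continuous rq := hσrc_cont.div hσTc_cont (fun t => ne_of_gt (hσTc_pos t))
        fun_prop
      exact hc.measurable
    · exact (isClosed_le continuous_snd continuous_fst).measurableSet
  have hk'x_meas : ∀ x, Measurable (fun y => k' x y) := fun x =>
    hk'_meas.comp (measurable_prodMk_left)
  have hk'y_meas : ∀ y, Measurable (fun x => k' x y) := fun y =>
    hk'_meas.comp (measurable_prodMk_right)
  -- k' agrees with k on Icc × Icc
  have hkk' : ∀ x ∈ Set.Icc xL xR, ∀ y ∈ Set.Icc xL xR, k x y = k' x y := by
    intro x hx' y hy'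
    rw [hk, hk'def]
    dsimp only
    by_cases h : y ≤ x
    · rw [if_pos h, if_pos h]
      have hGint : (∫ z in y..x, σT z) = G x - G y := by
        have h1 : (∫ z in y..x, σT z) = ∫ z in y..x, σTc z := by
          refine intervalIntegral.integral_congr ?_
          intro t ht
          rw [Set.uIcc_of_le h] at ht
          exact (hσTc_eq t ⟨le_trans hy'.1 ht.1, le_trans ht.2 hx'.2⟩).symm
        rw [h1, hGdef]
        rw [intervalIntegral.integral_interval_sub_left (hσTc_cont.intervalIntegrable _ _)
          (hσTc_cont.intervalIntegrable _ _)]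
      rw [hGint, hrqdef]
      dsimp only
      rw [hσrc_eq y hy', hσTc_eq y hy']
    · rw [if_neg h, if_neg h]
  -- membership of kernel slices in L²
  have hmemLp : ∀ x, MemLp (fun y => k' x y) 2 ν := by
    intro x
    refine MemLp.of_bound ((hk'x_meas x).aestronglyMeasurable) (1 / μ) ?_
    refine Filter.Eventually.of_forall fun y => ?_
    rw [Real.norm_eq_abs, abs_of_nonneg (hk'_nonneg x y)]
    exact hk'_le x y
  -- norm-squared as a lintegral, for any L² element
  have hnormf : ∀ f : Lp ℝ 2 ν, ENNReal.ofReal (‖f‖ ^ 2)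
      = ∫⁻ x, ENNReal.ofReal ((f : ℝ → ℝ) x * (f : ℝ → ℝ) x) ∂ν := by
    intro f
    rw [← real_inner_self_eq_norm_sq f, L2.inner_def,
      ofReal_integral_eq_lintegral_ofReal (L2.integrable_inner f f)
        (Filter.Eventually.of_forall fun a => real_inner_self_nonneg)]
    refine lintegral_congr fun a => ?_
    congr 1
  -- the inner product of a kernel slice with an L² function
  have hKinner : ∀ x, ∀ f : Lp ℝ 2 ν,
      (⟪(hmemLp x).toLp (fun y => k' x y), f⟫ : ℝ) = ∫ y, k' x y * f y ∂ν := by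
    intro x f
    rw [L2.inner_def]
    refine integral_congr_ae ?_
    filter_upwards [(hmemLp x).coeFn_toLp] with y hy
    rw [hy]
    simp [RCLike.inner_apply, mul_comm]
  -- A f is a.e. given by inner products against kernel slices
  have hAK : ∀ f : Lp ℝ 2 ν, (A f : ℝ → ℝ)
      =ᵐ[ν] fun x => (⟪(hmemLp x).toLp (fun y => k' x y), f⟫ : ℝ) := by
    intro f
    filter_upwards [hA f, hν_ae_Icc] with x hx1 hx2
    rw [hx1, hKinner x f]
    refine integral_congr_ae ?_
    filter_upwards [hν_ae_Icc] with y hy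
    rw [hkk' x hx2 y hy]
  -- measurability of inner products
  have hinner_meas : ∀ f : Lp ℝ 2 ν, AEStronglyMeasurable
      (fun x => (⟪(hmemLp x).toLp (fun y => k' x y), f⟫ : ℝ)) ν := by
    intro f
    have heq : (fun x => (⟪(hmemLp x).toLp (fun y => k' x y), f⟫ : ℝ))
        = fun x => ∫ y, k' x y * f y ∂ν := funext fun x => hKinner x f
    rw [heq]
    have hprod : AEStronglyMeasurable (fun p : ℝ × ℝ => k' p.1 p.2 * f p.2) (ν.prod ν) := by
      refine AEStronglyMeasurable.mul hk'_meas.aestronglyMeasurable ?_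
      exact (Lp.aestronglyMeasurable f).comp_quasiMeasurePreserving
        Measure.quasiMeasurePreserving_snd
    exact hprod.integral_prod_right'
  -- inner kernel integral bound
  have hinner_bound : ∀ y ∈ Set.Icc xL xR,
      ∫⁻ x, ENNReal.ofReal (k' x y * k' x y) ∂ν ≤ ENNReal.ofReal (1 / (2 * μ)) := by
    intro y hy
    have hδmeas : AEMeasurable (fun x => ENNReal.ofReal (σT x))
        (volume.restrict (Set.Icc xL xR)) :=
      (hσT.aemeasurable measurableSet_Icc).ennreal_ofReal
    have hgmeas : AEMeasurable (fun x => ENNReal.ofReal (k' x y * k' x y))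
        (volume.restrict (Set.Icc xL xR)) :=
      (((hk'y_meas y).mul (hk'y_meas y)).ennreal_ofReal).aemeasurable
    rw [hν, lintegral_withDensity_eq_lintegral_mul₀ hδmeas hgmeas]
    simp only [Pi.mul_apply]
    set ψ : ℝ → ℝ :=
      fun x => σTc x * ((1 / μ) * Real.exp (-(1 / μ) * (G x - G y)) * rq y) ^ 2 with hψdef
    set h : ℝ → ℝ := fun x => σTc x * (k' x y * k' x y) with hhdef
    have hhψ : ∀ x, h x = Set.indicator (Set.Ici y) ψ x := by
      intro x
      rw [Set.indicator_apply, hhdef, hψdef, hk'def]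
      dsimp only
      by_cases hc : y ≤ x
      · rw [if_pos hc, if_pos (Set.mem_Ici.mpr hc)]
        ring
      · rw [if_neg hc, if_neg (fun hmem => hc (Set.mem_Ici.mp hmem))]
        ring
    have hhb : ∀ x, ‖h x‖ ≤ M * (1 / μ * (1 / μ)) := by
      intro x
      have h1 := hσTc_pos x
      have h2 := hσTc_le_M x
      have h3 := hk'_nonneg x y
      have h4 := hk'_le x y
      have h6 : 0 < (1:ℝ) / μ := by positivity
      rw [hhdef, Real.norm_eq_abs]
      dsimp only
      rw [abs_of_nonneg (mul_nonneg h1.le (mul_nonneg h3 h3))]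
      exact mul_le_mul h2 (mul_le_mul h4 h4 h3 h6.le) (mul_nonneg h3 h3) (h1.le.trans h2)
    haveI : IsFiniteMeasure (volume.restrict (Set.Icc xL xR)) := by
      refine ⟨?_⟩
      rw [Measure.restrict_apply_univ, Real.volume_Icc]
      exact ENNReal.ofReal_lt_top
    have hhint : Integrable h (volume.restrict (Set.Icc xL xR)) := by
      have hm : AEStronglyMeasurable h (volume.restrict (Set.Icc xL xR)) :=
        ((hσTc_cont.measurable).mul ((hk'y_meas y).mul (hk'y_meas y))).aestronglyMeasurable
      exact memLp_one_iff_integrable.mp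
        (MemLp.of_bound hm _ (Filter.Eventually.of_forall hhb))
    have heq1 : ∫⁻ x, ENNReal.ofReal (σT x) * ENNReal.ofReal (k' x y * k' x y)
          ∂(volume.restrict (Set.Icc xL xR))
        = ENNReal.ofReal (∫ x in Set.Icc xL xR, h x) := by
      rw [ofReal_integral_eq_lintegral_ofReal hhint
        (Filter.Eventually.of_forall fun x =>
          mul_nonneg (hσTc_pos x).le (mul_nonneg (hk'_nonneg x y) (hk'_nonneg x y)))]
      refine lintegral_congr_ae ?_
      filter_upwards [ae_restrict_mem measurableSet_Icc] with x hx'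
      rw [hhdef]
      dsimp only
      rw [← hσTc_eq x hx', ← ENNReal.ofReal_mul (hσTc_pos x).le]
    rw [heq1]
    refine ENNReal.ofReal_le_ofReal ?_
    set c : ℝ := 1 / μ * rq y with hcdef
    set φ : ℝ → ℝ := fun t => -(μ / 2) * c ^ 2 * Real.exp (-(2 / μ) * (G t - G y)) with hφdef
    have hφderiv : ∀ t, HasDerivAt φ (ψ t) t := by
      intro t
      have h1 : HasDerivAt (fun t => -(2 / μ) * (G t - G y)) (-(2 / μ) * σTc t) t :=
        (((hG_deriv t).sub_const (G y)).const_mul (-(2 / μ)))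
      have h2 := h1.exp
      have h3 := h2.const_mul (-(μ / 2) * c ^ 2)
      have hval : -(μ / 2) * c ^ 2 * (Real.exp (-(2 / μ) * (G t - G y)) * (-(2 / μ) * σTc t))
          = ψ t := by
        have hsq : Real.exp (-(1 / μ) * (G t - G y)) * Real.exp (-(1 / μ) * (G t - G y))
            = Real.exp (-(2 / μ) * (G t - G y)) := by
          rw [← Real.exp_add]
          congr 1
          ring
        rw [hψdef, hcdef]
        dsimp only
        rw [← hsq]
        field_simp
      rw [hφdef, ← hval]
      exact h3
    have hψcont : Continuous ψ := by
      have hc1 : Continuous fun t => -(1 / μ) * (G t - G y) :=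
        continuous_const.mul (hG_cont.sub continuous_const)
      exact hσTc_cont.mul
        (((continuous_const.mul (Real.continuous_exp.comp hc1)).mul continuous_const).pow 2)
    have hinter : Set.Icc xL xR ∩ Set.Ici y = Set.Icc y xR :=
      Set.ext fun t => ⟨fun ht => ⟨ht.2, ht.1.2⟩, fun ht => ⟨⟨hy.1.trans ht.1, ht.2⟩, ht.1⟩⟩
    have hIcc_int : ∫ x in Set.Icc xL xR, h x = ∫ t in y..xR, ψ t := by
      calc ∫ x in Set.Icc xL xR, h x
          = ∫ x in Set.Icc xL xR, Set.indicator (Set.Ici y) ψ x :=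
            integral_congr_ae (Filter.Eventually.of_forall fun x => hhψ x)
        _ = ∫ x in Set.Icc xL xR ∩ Set.Ici y, ψ x := setIntegral_indicator measurableSet_Ici
        _ = ∫ x in Set.Icc y xR, ψ x := by rw [hinter]
        _ = ∫ x in Set.Ioc y xR, ψ x := integral_Icc_eq_integral_Ioc
        _ = ∫ t in y..xR, ψ t := (intervalIntegral.integral_of_le hy.2).symm
    have hFTC : ∫ t in y..xR, ψ t = φ xR - φ y :=
      intervalIntegral.integral_eq_sub_of_hasDerivAt (fun t _ => hφderiv t)
        (hψcont.intervalIntegrable _ _)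
    rw [hIcc_int, hFTC]
    have hE1 : Real.exp (-(2 / μ) * (G y - G y)) = 1 := by
      rw [sub_self, mul_zero, Real.exp_zero]
    have hE2 : 0 < Real.exp (-(2 / μ) * (G xR - G y)) := Real.exp_pos _
    have hrq1 := hrq_pos y
    have hrq2 := hrq_le y
    have hc2 : c ^ 2 ≤ (1 / μ) ^ 2 := by
      rw [hcdef, mul_pow]
      have hr2 : rq y ^ 2 ≤ 1 := by nlinarith
      have := mul_le_mul_of_nonneg_left hr2 (sq_nonneg (1 / μ))
      linarith
    have hkey : (μ / 2) * (1 / μ) ^ 2 = 1 / (2 * μ) := by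
      field_simp
    rw [hφdef]
    dsimp only
    rw [hE1]
    have hstep1 : (μ / 2) * c ^ 2 ≤ (μ / 2) * (1 / μ) ^ 2 :=
      mul_le_mul_of_nonneg_left hc2 (half_pos hμ).le
    have hstep2 : 0 ≤ (μ / 2) * c ^ 2 * Real.exp (-(2 / μ) * (G xR - G y)) :=
      mul_nonneg (mul_nonneg (half_pos hμ).le (sq_nonneg c)) hE2.le
    nlinarith [hstep1, hstep2, hkey]
  -- the master bound
  have hbound : ∀ {ι' : Type} (b : HilbertBasis ι' ℝ (Lp ℝ 2 ν)),
      ∑' i, ENNReal.ofReal (‖A (b i)‖ ^ 2) ≤ ENNReal.ofReal B := by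
    intro ι' b
    have step1 : ∀ i, ENNReal.ofReal (‖A (b i)‖ ^ 2)
        = ∫⁻ x, ENNReal.ofReal ((⟪(hmemLp x).toLp (fun y => k' x y), b i⟫ : ℝ)
            * (⟪(hmemLp x).toLp (fun y => k' x y), b i⟫ : ℝ)) ∂ν := by
      intro i
      rw [hnormf (A (b i))]
      refine lintegral_congr_ae ?_
      filter_upwards [hAK (b i)] with x hx'
      rw [hx']
    have step2 : ∑' i, ENNReal.ofReal (‖A (b i)‖ ^ 2)
        ≤ ∫⁻ x, ∫⁻ y, ENNReal.ofReal (k' x y * k' x y) ∂ν ∂ν := by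
      rw [ENNReal.tsum_eq_iSup_sum]
      refine iSup_le fun s => ?_
      have hmeasg : ∀ i ∈ s, AEMeasurable (fun x =>
          ENNReal.ofReal ((⟪(hmemLp x).toLp (fun y => k' x y), b i⟫ : ℝ)
            * (⟪(hmemLp x).toLp (fun y => k' x y), b i⟫ : ℝ))) ν := fun i _ =>
        (((hinner_meas (b i)).aemeasurable.mul (hinner_meas (b i)).aemeasurable).ennreal_ofReal)
      calc ∑ i ∈ s, ENNReal.ofReal (‖A (b i)‖ ^ 2)
          = ∑ i ∈ s, ∫⁻ x, ENNReal.ofReal ((⟪(hmemLp x).toLp (fun y => k' x y), b i⟫ : ℝ)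
              * (⟪(hmemLp x).toLp (fun y => k' x y), b i⟫ : ℝ)) ∂ν :=
            Finset.sum_congr rfl fun i _ => step1 i
        _ = ∫⁻ x, ∑ i ∈ s, ENNReal.ofReal ((⟪(hmemLp x).toLp (fun y => k' x y), b i⟫ : ℝ)
              * (⟪(hmemLp x).toLp (fun y => k' x y), b i⟫ : ℝ)) ∂ν :=
            (lintegral_finset_sum' s hmeasg).symm
        _ ≤ ∫⁻ x, ∫⁻ y, ENNReal.ofReal (k' x y * k' x y) ∂ν ∂ν := by
            refine lintegral_mono fun x => ?_
            calc ∑ i ∈ s, ENNReal.ofReal ((⟪(hmemLp x).toLp (fun y => k' x y), b i⟫ : ℝ)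
                  * (⟪(hmemLp x).toLp (fun y => k' x y), b i⟫ : ℝ))
                ≤ ∑' i, ENNReal.ofReal ((⟪(hmemLp x).toLp (fun y => k' x y), b i⟫ : ℝ)
                  * (⟪(hmemLp x).toLp (fun y => k' x y), b i⟫ : ℝ)) := ENNReal.sum_le_tsum s
              _ = ENNReal.ofReal (‖(hmemLp x).toLp (fun y => k' x y)‖ ^ 2) := by
                  rw [← parseval_ofReal b ((hmemLp x).toLp (fun y => k' x y))]
                  exact tsum_congr fun i => by rw [← sq, real_inner_comm]
              _ = ∫⁻ y, ENNReal.ofReal (k' x y * k' x y) ∂ν := by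
                  rw [hnormf]
                  refine lintegral_congr_ae ?_
                  filter_upwards [(hmemLp x).coeFn_toLp] with y hy
                  rw [hy]
    refine le_trans step2 ?_
    rw [lintegral_lintegral_swap ((hk'_meas.mul hk'_meas).ennreal_ofReal.aemeasurable)]
    calc ∫⁻ y, ∫⁻ x, ENNReal.ofReal (k' x y * k' x y) ∂ν ∂ν
        ≤ ∫⁻ _, ENNReal.ofReal (1 / (2 * μ)) ∂ν := by
          refine lintegral_mono_ae ?_
          filter_upwards [hν_ae_Icc] with y hy'
          exact hinner_bound y hy'
      _ = ENNReal.ofReal (1 / (2 * μ)) * ν Set.univ := by rw [lintegral_const]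
      _ ≤ ENNReal.ofReal (1 / (2 * μ)) * (ENNReal.ofReal M * ENNReal.ofReal (xR - xL)) :=
          mul_le_mul_right hνuniv _
      _ = ENNReal.ofReal (1 / (2 * μ) * (M * (xR - xL))) := by
          rw [← ENNReal.ofReal_mul (by positivity), ← ENNReal.ofReal_mul (by positivity)]
      _ ≤ ENNReal.ofReal B := by
          refine ENNReal.ofReal_le_ofReal ?_
          rw [hBdef, abs_of_nonneg (by linarith : (0:ℝ) ≤ xR - xL)]
          have hL0 : 0 < xR - xL := by linarith
          have key : M ≤ 2 * (M ^ 2 * S) := by nlinarith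
          calc 1 / (2 * μ) * (M * (xR - xL)) = (xR - xL) * M / (2 * μ) := by ring
            _ ≤ (xR - xL) * (2 * (M ^ 2 * S)) / (2 * μ) := by
                gcongr
            _ = 1 / μ * (xR - xL) * M ^ 2 * S := by field_simp
  -- conclusions
  have hper : ∀ {ι' : Type} (b : HilbertBasis ι' ℝ (Lp ℝ 2 ν)),
      Summable (fun i => ‖A (b i)‖ ^ 2) := by
    intro ι' b
    have hne : (∑' i, ENNReal.ofReal (‖A (b i)‖ ^ 2)) ≠ ⊤ :=
      ne_top_of_le_ne_top ENNReal.ofReal_ne_top (hbound b)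
    have h1 := ENNReal.summable_toReal hne
    have h2 : (fun i => (ENNReal.ofReal (‖A (b i)‖ ^ 2)).toReal)
        = fun i => ‖A (b i)‖ ^ 2 := funext fun i => ENNReal.toReal_ofReal (sq_nonneg _)
    rwa [h2] at h1
  constructor
  · obtain ⟨w, b0, -⟩ := exists_hilbertBasis ℝ (Lp ℝ 2 ν)
    exact isCompactOperator_of_summable b0 A (hper b0)
  · intro ι b
    have hfun1 : (fun i => (⟪b i, ((ContinuousLinearMap.adjoint A) ∘L A) (b i)⟫ : ℝ))
        = fun i => ‖A (b i)‖ ^ 2 := by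
      funext i
      rw [ContinuousLinearMap.comp_apply, ContinuousLinearMap.adjoint_inner_right,
        real_inner_self_eq_norm_sq]
    have hfun2 : (fun i => (⟪b i, (A ∘L (ContinuousLinearMap.adjoint A)) (b i)⟫ : ℝ))
        = fun i => ‖(ContinuousLinearMap.adjoint A) (b i)‖ ^ 2 := by
      funext i
      rw [ContinuousLinearMap.comp_apply, ← ContinuousLinearMap.adjoint_inner_left,
        real_inner_self_eq_norm_sq]
    have hper2 : Summable (fun i => ‖(ContinuousLinearMap.adjoint A) (b i)‖ ^ 2) := by
      have hne : (∑' i, ENNReal.ofReal (‖(ContinuousLinearMap.adjoint A) (b i)‖ ^ 2)) ≠ ⊤ := by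
        rw [← hs_sum_adjoint b A]
        exact ne_top_of_le_ne_top ENNReal.ofReal_ne_top (hbound b)
      have h1 := ENNReal.summable_toReal hne
      have h2 : (fun i => (ENNReal.ofReal (‖(ContinuousLinearMap.adjoint A) (b i)‖ ^ 2)).toReal)
          = fun i => ‖(ContinuousLinearMap.adjoint A) (b i)‖ ^ 2 :=
        funext fun i => ENNReal.toReal_ofReal (sq_nonneg _)
      rwa [h2] at h1
    have htsum1 : (∑' i, ‖A (b i)‖ ^ 2)
        = (∑' i, ENNReal.ofReal (‖A (b i)‖ ^ 2)).toReal := by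
      rw [ENNReal.tsum_toReal_eq (fun i => ENNReal.ofReal_ne_top)]
      exact tsum_congr fun i => (ENNReal.toReal_ofReal (sq_nonneg _)).symm
    have htsum2 : (∑' i, ‖(ContinuousLinearMap.adjoint A) (b i)‖ ^ 2)
        = (∑' i, ENNReal.ofReal (‖(ContinuousLinearMap.adjoint A) (b i)‖ ^ 2)).toReal := by
      rw [ENNReal.tsum_toReal_eq (fun i => ENNReal.ofReal_ne_top)]
      exact tsum_congr fun i => (ENNReal.toReal_ofReal (sq_nonneg _)).symm
    refine ⟨by rw [hfun1]; exact hper b, by rw [hfun2]; exact hper2, ?_, ?_⟩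
    · rw [hfun1, hfun2, htsum1, htsum2, hs_sum_adjoint b A]
    · rw [hfun1, htsum1]
      have := ENNReal.toReal_mono ENNReal.ofReal_ne_top (hbound b)
      rw [ENNReal.toReal_ofReal hB0] at this
      exact this
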